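/- Let (a_n) be an increasing sequence of reals tending to ∞. Suppose for each 0 ≤ p < 1 there exists a p-large set containing no affine copy of (a_n). Then there exists a measurable set F ⊆ ℝ with lim_{k→∞} m(F ∩ [k, k+1]) = 1 containing no affine copy of (a_n); i.e., no x ∈ ℝ, y ≠ 0 satisfy x + y·a_n ∈ F for all n. -/

import Mathlib

open MeasureTheory Filter
open scoped ENNReal

/-- A measurable set `E ⊆ ℝ` is `p`-large if `m(E ∩ [k, k+1]) ≥ p` for every integer `k`. -/
def PLarge (p : ℝ) (E : Set ℝ) : Prop :=
  ∀ k : ℤ, ENNReal.ofReal p ≤ volume (E ∩ Set.Icc (k : ℝ) (k + 1))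

theorem stmt_15 (a : ℕ → ℝ) (hmono : StrictMono a) (hlim : Tendsto a atTop atTop)
    (H : ∀ p : ℝ, 0 ≤ p → p < 1 → ∃ E : Set ℝ, MeasurableSet E ∧ PLarge p E ∧
      ¬ ∃ x y : ℝ, y ≠ 0 ∧ ∀ n, x + y * a n ∈ E) :
    ∃ F : Set ℝ, MeasurableSet F ∧
      Tendsto (fun k : ℕ => volume (F ∩ Set.Icc (k : ℝ) (k + 1))) atTop (nhds 1) ∧
      ¬ ∃ x y : ℝ, y ≠ 0 ∧ ∀ n, x + y * a n ∈ F := by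
  classical
  -- the small parameters
  set ε : ℕ → ℝ≥0∞ := fun j => (2 : ℝ≥0∞)⁻¹ ^ (j + 1) with hεdef
  have hεofReal : ∀ j : ℕ, ENNReal.ofReal ((2⁻¹ : ℝ) ^ (j + 1)) = ε j := by
    intro j
    rw [ENNReal.ofReal_pow (by norm_num)]
    congr 1
    rw [ENNReal.ofReal_inv_of_pos (by norm_num)]
    norm_num
  have hεne : ∀ j : ℕ, ε j ≠ 0 := by
    intro j
    simp [hεdef]
  have hcpos : ∀ j : ℕ, 0 < (2⁻¹ : ℝ) ^ (j + 1) := fun j => by positivity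
  have hcle : ∀ j : ℕ, (2⁻¹ : ℝ) ^ (j + 1) ≤ 1 := fun j =>
    pow_le_one₀ (by norm_num) (by norm_num)
  -- choose the avoiding sets
  choose E hEm hEl hEa using fun j : ℕ =>
    H (1 - (2⁻¹ : ℝ) ^ (j + 1)) (by linarith [hcle j]) (by linarith [hcpos j])
  -- complement has small measure on each block
  have hcomp : ∀ (j : ℕ) (k : ℤ),
      volume ((E j)ᶜ ∩ Set.Icc (k : ℝ) (k + 1)) ≤ ε j := by
    intro j k
    have hIm : volume (Set.Icc (k : ℝ) (k + 1)) = 1 := by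
      rw [Real.volume_Icc]; simp
    have hsub : E j ∩ Set.Icc (k : ℝ) (k + 1) ⊆ Set.Icc (k : ℝ) (k + 1) :=
      Set.inter_subset_right
    have hmeas : MeasurableSet (E j ∩ Set.Icc (k : ℝ) (k + 1)) :=
      (hEm j).inter measurableSet_Icc
    have hne : volume (E j ∩ Set.Icc (k : ℝ) (k + 1)) ≠ ⊤ := by
      refine ne_top_of_le_ne_top ?_ (measure_mono hsub)
      rw [hIm]; exact ENNReal.one_ne_top
    have hdiff : (E j)ᶜ ∩ Set.Icc (k : ℝ) (k + 1)
        = Set.Icc (k : ℝ) (k + 1) \ (E j ∩ Set.Icc (k : ℝ) (k + 1)) := by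
      ext x; simp only [Set.mem_inter_iff, Set.mem_compl_iff, Set.mem_diff]; tauto
    rw [hdiff, measure_diff hsub hmeas.nullMeasurableSet hne, hIm]
    have h1 : ENNReal.ofReal (1 - (2⁻¹ : ℝ) ^ (j + 1))
        ≤ volume (E j ∩ Set.Icc (k : ℝ) (k + 1)) := hEl j k
    calc 1 - volume (E j ∩ Set.Icc (k : ℝ) (k + 1))
        ≤ 1 - ENNReal.ofReal (1 - (2⁻¹ : ℝ) ^ (j + 1)) := tsub_le_tsub_left h1 1
      _ = ε j := by
          rw [← ENNReal.ofReal_one, ← ENNReal.ofReal_sub _ (by linarith [hcle j])]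
          rw [show (1 : ℝ) - (1 - (2⁻¹ : ℝ) ^ (j + 1)) = (2⁻¹ : ℝ) ^ (j + 1) by ring]
          exact hεofReal j
  -- open localized enlargements of the complement, per block
  have hVex : ∀ (j : ℕ) (k : ℤ), ∃ V : Set ℝ, IsOpen V ∧
      ((E j)ᶜ ∩ Set.Icc (k : ℝ) (k + 1)) ⊆ V ∧
      V ⊆ Set.Ioo ((k : ℝ) - 1) ((k : ℝ) + 2) ∧ volume V ≤ 2 * ε j := by
    intro j k
    have hA : volume ((E j)ᶜ ∩ Set.Icc (k : ℝ) (k + 1)) ≠ ⊤ :=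
      ne_top_of_le_ne_top (by simp [hεdef]) (hcomp j k)
    obtain ⟨V₀, hV₀sub, hV₀open, hV₀vol⟩ :=
      Set.exists_isOpen_lt_add ((E j)ᶜ ∩ Set.Icc (k : ℝ) (k + 1)) hA (hεne j)
    refine ⟨V₀ ∩ Set.Ioo ((k : ℝ) - 1) ((k : ℝ) + 2),
      hV₀open.inter isOpen_Ioo, ?_, Set.inter_subset_right, ?_⟩
    · intro x hx
      refine ⟨hV₀sub hx, ?_⟩
      obtain ⟨-, hx1, hx2⟩ := hx
      exact ⟨by linarith, by linarith⟩
    · calc volume (V₀ ∩ Set.Ioo ((k : ℝ) - 1) ((k : ℝ) + 2)) ≤ volume V₀ :=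
            measure_mono Set.inter_subset_left
        _ ≤ volume ((E j)ᶜ ∩ Set.Icc (k : ℝ) (k + 1)) + ε j := hV₀vol.le
        _ ≤ ε j + ε j := add_le_add_left (hcomp j k) _
        _ = 2 * ε j := by ring
  choose V hVo hVs hVl hVv using hVex
  -- the open sets U j
  set U : ℕ → Set ℝ := fun j => ⋃ k : ℤ, V j k with hUdef
  have hUo : ∀ j, IsOpen (U j) := fun j => isOpen_iUnion fun k => hVo j k
  have hUs : ∀ j, (E j)ᶜ ⊆ U j := by
    intro j x hx
    refine Set.mem_iUnion.2 ⟨⌊x⌋, hVs j ⌊x⌋ ⟨hx, Int.floor_le x, ?_⟩⟩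
    push_cast
    exact (Int.lt_floor_add_one x).le
  -- measure of U j on each block
  have hUb : ∀ (j : ℕ) (k : ℤ),
      volume (U j ∩ Set.Icc (k : ℝ) (k + 1)) ≤ 6 * ε j := by
    intro j k
    have hsub : U j ∩ Set.Icc (k : ℝ) (k + 1)
        ⊆ V j (k - 1) ∪ V j k ∪ V j (k + 1) := by
      rintro x ⟨hxU, hxk, hxk1⟩
      obtain ⟨s, hs⟩ := Set.mem_iUnion.1 hxU
      obtain ⟨hs1, hs2⟩ := hVl j s hs
      have h1 : s = k - 1 ∨ s = k ∨ s = k + 1 := by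
        have hA : (s : ℝ) < (k : ℝ) + 2 := by linarith
        have hB : (k : ℝ) - 2 < (s : ℝ) := by linarith
        have hA' : s < k + 2 := by exact_mod_cast (by push_cast; linarith : (s:ℝ) < ((k + 2 : ℤ) : ℝ))
        have hB' : k - 2 < s := by exact_mod_cast (by push_cast; linarith : (((k - 2 : ℤ)) : ℝ) < (s:ℝ))
        omega
      rcases h1 with h | h | h
      · exact Or.inl (Or.inl (h ▸ hs))
      · exact Or.inl (Or.inr (h ▸ hs))
      · exact Or.inr (h ▸ hs)
    calc volume (U j ∩ Set.Icc (k : ℝ) (k + 1))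
        ≤ volume (V j (k - 1) ∪ V j k ∪ V j (k + 1)) := measure_mono hsub
      _ ≤ volume (V j (k - 1) ∪ V j k) + volume (V j (k + 1)) := measure_union_le _ _
      _ ≤ volume (V j (k - 1)) + volume (V j k) + volume (V j (k + 1)) :=
          add_le_add_left (measure_union_le _ _) _
      _ ≤ 2 * ε j + 2 * ε j + 2 * ε j :=
          add_le_add (add_le_add (hVv j (k - 1)) (hVv j k)) (hVv j (k + 1))
      _ = 6 * ε j := by ring
  -- every affine copy hits U j
  have hhit : ∀ (j : ℕ) (x y : ℝ), y ≠ 0 → ∃ n, x + y * a n ∈ U j := by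
    intro j x y hy
    have := hEa j
    push_neg at this
    obtain ⟨n, hn⟩ := this x y hy
    exact ⟨n, hUs j hn⟩
  -- compactness: copies with bounded parameters hit U j at bounded height
  have hNex : ∀ j : ℕ, ∃ N : ℕ, ∀ x y : ℝ, |x| ≤ (j : ℝ) →
      ((j : ℝ) + 1)⁻¹ ≤ y → y ≤ (j : ℝ) + 1 →
      ∃ n, x + y * a n ∈ U j ∧ x + y * a n < (N : ℝ) := by
    intro j
    set P : Set (ℝ × ℝ) :=
      Set.Icc (-(j : ℝ)) (j : ℝ) ×ˢ Set.Icc (((j : ℝ) + 1)⁻¹) ((j : ℝ) + 1) with hPdef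
    have hPc : IsCompact P := isCompact_Icc.prod isCompact_Icc
    set C : ℕ → Set (ℝ × ℝ) := fun N =>
      ⋃ n : ℕ, (fun q : ℝ × ℝ => q.1 + q.2 * a n) ⁻¹' (U j ∩ Set.Iio (N : ℝ)) with hCdef
    have hCopen : ∀ N, IsOpen (C N) := by
      intro N
      refine isOpen_iUnion fun n => ((hUo j).inter isOpen_Iio).preimage ?_
      exact continuous_fst.add (continuous_snd.mul continuous_const)
    have hCcover : P ⊆ ⋃ N : ℕ, C N := by
      rintro ⟨x, y⟩ ⟨hx, hy1, hy2⟩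
      have hypos : 0 < y := lt_of_lt_of_le (by positivity) hy1
      obtain ⟨n, hn⟩ := hhit j x y (ne_of_gt hypos)
      obtain ⟨N, hN⟩ := exists_nat_gt (x + y * a n)
      refine Set.mem_iUnion.2 ⟨N, ?_⟩
      simp only [hCdef, Set.mem_iUnion, Set.mem_preimage]
      exact ⟨n, hn, hN⟩
    obtain ⟨t, ht⟩ := hPc.elim_finite_subcover C hCopen hCcover
    refine ⟨t.sup id + 1, ?_⟩
    intro x y hx hy1 hy2
    have hmem : (x, y) ∈ P := ⟨abs_le.1 hx, hy1, hy2⟩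
    have := ht hmem
    simp only [Set.mem_iUnion] at this
    obtain ⟨Nt, hNt, hmemC⟩ := this
    simp only [hCdef, Set.mem_iUnion, Set.mem_preimage, Set.mem_inter_iff,
      Set.mem_Iio] at hmemC
    obtain ⟨n, hn, hlt⟩ := hmemC
    refine ⟨n, hn, lt_of_lt_of_le hlt ?_⟩
    have hle : Nt ≤ t.sup id + 1 := le_trans (Finset.le_sup (f := id) hNt) (Nat.le_succ _)
    exact_mod_cast hle
  choose N hNspec using hNex
  -- monotone truncation bounds
  set T : ℕ → ℕ := fun j => (Finset.range (j + 1)).sup N with hTdef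
  have hT : ∀ j, N j ≤ T j := fun j =>
    Finset.le_sup (Finset.self_mem_range_succ j)
  have hTmono : ∀ i j : ℕ, i ≤ j → T i ≤ T j := fun i j hij =>
    Finset.sup_mono (Finset.range_subset_range.2 (by omega))
  -- the exceptional set and the final set
  set Hs : Set ℝ := ⋃ j : ℕ, (U j ∩ Set.Ico (0 : ℝ) (T j : ℝ)) with hHdef
  have hHm : MeasurableSet Hs :=
    MeasurableSet.iUnion fun j => ((hUo j).measurableSet.inter measurableSet_Ico)
  refine ⟨Set.Ici (0 : ℝ) \ Hs, measurableSet_Ici.diff hHm, ?_, ?_⟩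
  · -- measure limit
    -- per-block bound for large k
    have hblock : ∀ J k : ℕ, (T J : ℝ) ≤ (k : ℝ) →
        volume (Hs ∩ Set.Icc (k : ℝ) (k + 1)) ≤ 12 * ε J := by
      intro J k hk
      have hsub : Hs ∩ Set.Icc (k : ℝ) (k + 1)
          ⊆ ⋃ i : ℕ, (U (J + i) ∩ Set.Icc (k : ℝ) (k + 1)) := by
        rintro x ⟨hxH, hxI⟩
        obtain ⟨j, hj⟩ := Set.mem_iUnion.1 hxH
        obtain ⟨hxU, hx0, hxT⟩ := hj
        have hJj : J ≤ j := by
          by_contra hlt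
          push_neg at hlt
          have : (T j : ℝ) ≤ (T J : ℝ) := by exact_mod_cast hTmono j J hlt.le
          have hxk : (k : ℝ) ≤ x := hxI.1
          linarith
        refine Set.mem_iUnion.2 ⟨j - J, ?_⟩
        have : J + (j - J) = j := by omega
        rw [this]
        exact ⟨hxU, hxI⟩
      calc volume (Hs ∩ Set.Icc (k : ℝ) (k + 1))
          ≤ volume (⋃ i : ℕ, (U (J + i) ∩ Set.Icc (k : ℝ) (k + 1))) := measure_mono hsub
        _ ≤ ∑' i : ℕ, volume (U (J + i) ∩ Set.Icc (k : ℝ) (k + 1)) := measure_iUnion_le _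
        _ ≤ ∑' i : ℕ, 6 * ε (J + i) := by
            refine ENNReal.tsum_le_tsum fun i => ?_
            have := hUb (J + i) (k : ℤ)
            simpa using this
        _ = 12 * ε J := by
            have : ∀ i : ℕ, 6 * ε (J + i) = (6 * ε J) * (2 : ℝ≥0∞)⁻¹ ^ i := by
              intro i
              simp only [hεdef]
              rw [show J + i + 1 = (J + 1) + i by omega, pow_add]
              ring
            rw [tsum_congr this, ENNReal.tsum_mul_left, ENNReal.tsum_geometric,
              ENNReal.one_sub_inv_two]
            rw [show ((2:ℝ≥0∞)⁻¹)⁻¹ = 2 by simp]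
            ring
      -- end hblock
    have hFIcc : ∀ k : ℕ, (Set.Ici (0:ℝ) \ Hs) ∩ Set.Icc (k : ℝ) (k + 1)
        = Set.Icc (k : ℝ) (k + 1) \ (Hs ∩ Set.Icc (k : ℝ) (k + 1)) := by
      intro k
      ext x
      simp only [Set.mem_inter_iff, Set.mem_diff, Set.mem_Ici, Set.mem_Icc]
      constructor
      · rintro ⟨⟨hx0, hxH⟩, hxI⟩
        exact ⟨hxI, fun h => hxH h.1⟩
      · rintro ⟨hxI, hxH⟩
        have h0k : (0:ℝ) ≤ (k : ℝ) := Nat.cast_nonneg k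
        exact ⟨⟨le_trans h0k hxI.1, fun h => hxH ⟨h, hxI⟩⟩, hxI⟩
    have hIm : ∀ k : ℕ, volume (Set.Icc (k : ℝ) (k + 1)) = 1 := by
      intro k; rw [Real.volume_Icc]; simp
    have hHne : ∀ k : ℕ, volume (Hs ∩ Set.Icc (k : ℝ) (k + 1)) ≠ ⊤ := by
      intro k
      refine ne_top_of_le_ne_top ?_ (measure_mono Set.inter_subset_right)
      rw [hIm k]; exact ENNReal.one_ne_top
    have hFvol : ∀ k : ℕ, volume ((Set.Ici (0:ℝ) \ Hs) ∩ Set.Icc (k : ℝ) (k + 1))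
        = 1 - volume (Hs ∩ Set.Icc (k : ℝ) (k + 1)) := by
      intro k
      rw [hFIcc k, measure_diff Set.inter_subset_right
        (hHm.inter measurableSet_Icc).nullMeasurableSet (hHne k), hIm k]
    rw [ENNReal.tendsto_nhds ENNReal.one_ne_top]
    intro δ hδ
    -- choose J with 12 * ε J ≤ δ
    have hpow : Tendsto (fun n : ℕ => (2 : ℝ≥0∞)⁻¹ ^ n) atTop (nhds 0) :=
      ENNReal.tendsto_pow_atTop_nhds_zero_of_lt_one (by norm_num)
    have hδ12 : (0 : ℝ≥0∞) < δ / 12 := ENNReal.div_pos (ne_of_gt hδ) (by norm_num)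
    obtain ⟨J, hJ⟩ := (hpow.eventually (gt_mem_nhds hδ12)).exists
    have hJbound : 12 * ε J ≤ δ := by
      have h1 : ε J ≤ (2 : ℝ≥0∞)⁻¹ ^ J := by
        simp only [hεdef]
        rw [pow_succ]
        calc (2 : ℝ≥0∞)⁻¹ ^ J * 2⁻¹ ≤ (2 : ℝ≥0∞)⁻¹ ^ J * 1 :=
              mul_le_mul_right (ENNReal.inv_le_one.mpr one_le_two) _
          _ = (2 : ℝ≥0∞)⁻¹ ^ J := mul_one _
      calc (12 : ℝ≥0∞) * ε J ≤ 12 * (2 : ℝ≥0∞)⁻¹ ^ J := by gcongr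
        _ ≤ 12 * (δ / 12) := by gcongr
        _ = δ := ENNReal.mul_div_cancel' (by norm_num) (by norm_num)
    filter_upwards [eventually_ge_atTop (T J)] with k hk
    have hkR : (T J : ℝ) ≤ (k : ℝ) := by exact_mod_cast hk
    have hb : volume (Hs ∩ Set.Icc (k : ℝ) (k + 1)) ≤ δ :=
      le_trans (hblock J k hkR) hJbound
    rw [hFvol k]
    constructor
    · exact le_trans (tsub_le_tsub_left hb 1) (by rfl)
    · exact le_trans tsub_le_self le_self_add
  · -- no affine copy
    rintro ⟨x, y, hy, hmem⟩
    rcases lt_or_gt_of_ne hy with hneg | hpos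
    · -- y < 0 : points go to -∞
      obtain ⟨n, hn⟩ := (hlim.eventually_gt_atTop ((-x) / y)).exists
      have h1 : y * a n < y * ((-x) / y) := mul_lt_mul_of_neg_left hn hneg
      have h2 : y * ((-x) / y) = -x := by
        rw [mul_comm]; exact div_mul_cancel₀ (-x) hy
      rw [h2] at h1
      have h4 := (hmem n).1
      simp only [Set.mem_Ici] at h4
      clear hn h2
      linarith
    · -- y > 0
      obtain ⟨j, hj⟩ := exists_nat_ge (max |x| (max (1 / y) y))
      have hxj : |x| ≤ (j : ℝ) := le_trans (le_max_left _ _) hj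
      have hjj : (j : ℝ) ≤ (j : ℝ) + 1 := by linarith
      have h1y : 1 / y ≤ (j : ℝ) + 1 :=
        le_trans (le_trans (le_max_left _ _) (le_max_right _ _)) (hj.trans hjj)
      have hyj : y ≤ (j : ℝ) + 1 :=
        le_trans (le_trans (le_max_right _ _) (le_max_right _ _)) (hj.trans hjj)
      have hjpos : (0 : ℝ) < (j : ℝ) + 1 := by positivity
      have hinv : ((j : ℝ) + 1)⁻¹ ≤ y := by
        rw [← one_div]
        exact (one_div_le hjpos hpos).2 h1y
      obtain ⟨n, hnU, hnlt⟩ := hNspec j x y hxj hinv hyj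
      obtain ⟨hge, hnot⟩ := hmem n
      simp only [Set.mem_Ici] at hge
      refine hnot (Set.mem_iUnion.2 ⟨j, hnU, hge, ?_⟩)
      have : (N j : ℝ) ≤ (T j : ℝ) := by exact_mod_cast hT j
      linarith
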